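/- Let p be a prime and G a group in which every finite-index subgroup has index a power of p. Let φ: D → G be a virtual endomorphism with [G:D] = p, and let (D_n) be the sequence of domains of the powers of φ (D_0 = G, D_{n+1} = {x ∈ D : φ(x) ∈ D_n}). If φ(D_{n+1}) ⊄ D_{n+1} for all n ≥ 0, then [D_n : D_{n+1}] = p for all n ≥ 0. -/

import Mathlib

theorem stmt17 (p : ℕ) (hp : p.Prime) {G : Type*} [Group G]
    (hG : ∀ H : Subgroup G, H.index ≠ 0 → ∃ m : ℕ, H.index = p ^ m)
    (D : Subgroup G) (hD : D.index = p) (φ : D →* G)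
    (Dn : ℕ → Subgroup G) (hDn0 : Dn 0 = ⊤)
    (hDnsucc : ∀ n, Dn (n + 1) = Subgroup.map D.subtype (Subgroup.comap φ (Dn n)))
    (hnotinv : ∀ n, ¬ Subgroup.map φ ((Dn (n + 1)).subgroupOf D) ≤ Dn (n + 1)) :
    ∀ n, (Dn (n + 1)).relIndex (Dn n) = p := by
  -- D_{n+1} ≤ D
  have hleD : ∀ n, Dn (n + 1) ≤ D := by
    intro n
    rw [hDnsucc]
    exact (Subgroup.map_subtype_le _)
  -- (D_{n+1}).subgroupOf D = comap φ (Dn n)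
  have hsub : ∀ n, (Dn (n + 1)).subgroupOf D = Subgroup.comap φ (Dn n) := by
    intro n
    rw [hDnsucc, Subgroup.subgroupOf,
      Subgroup.comap_map_eq_self_of_injective D.subtype_injective]
  -- φ maps comap φ (Dn n) into Dn n
  have hmaple : ∀ n, Subgroup.map φ (Subgroup.comap φ (Dn n)) ≤ Dn n := by
    intro n
    rintro _ ⟨x, hx, rfl⟩
    exact hx
  -- chain
  have hchain : ∀ n, Dn (n + 1) ≤ Dn n := by
    intro n
    induction n with
    | zero => rw [hDn0]; exact le_top
    | succ n ih =>
      rw [hDnsucc (n + 1)]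
      calc Subgroup.map D.subtype (Subgroup.comap φ (Dn (n + 1)))
          ≤ Subgroup.map D.subtype (Subgroup.comap φ (Dn n)) :=
            Subgroup.map_mono (Subgroup.comap_mono ih)
        _ = Dn (n + 1) := (hDnsucc n).symm
  -- base case computations
  have hD1 : Dn 1 = D := by
    rw [hDnsucc 0, hDn0, Subgroup.comap_top, ← MonoidHom.range_eq_map,
      D.range_subtype]
  have hbase : (Dn 1).relIndex (Dn 0) = p := by
    rw [hD1, hDn0, Subgroup.relIndex_top_right, hD]
  -- main induction: relIndex = p and index ≠ 0
  have main : ∀ n, (Dn (n + 1)).relIndex (Dn n) = p ∧ (Dn (n + 1)).index ≠ 0 := by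
    intro n
    induction n with
    | zero => exact ⟨hbase, by rw [hD1, hD]; exact hp.ne_zero⟩
    | succ n ih =>
      obtain ⟨ihrel, ihind⟩ := ih
      set r := (Dn (n + 2)).relIndex (Dn (n + 1)) with hr
      -- rewrite r via comap
      have key : r = (Dn (n + 1)).relIndex (Subgroup.map φ ((Dn (n + 1)).subgroupOf D)) := by
        rw [hr, ← Subgroup.relIndex_subgroupOf (hleD n), hsub (n + 1),
          Subgroup.relIndex_comap]
      have hle' : Subgroup.map φ ((Dn (n + 1)).subgroupOf D) ≤ Dn n := by
        rw [hsub n]; exact hmaple n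
      have hpne : (Dn (n + 1)).relIndex (Dn n) ≠ 0 := by rw [ihrel]; exact hp.ne_zero
      have hr0 : r ≠ 0 := by
        rw [key]
        intro h0
        exact hpne (Subgroup.relIndex_eq_zero_of_le_right hle' h0)
      have hrle : r ≤ p := by
        rw [key, ← ihrel]
        exact Subgroup.relIndex_le_of_le_right hle' hpne
      have hr1 : r ≠ 1 := by
        intro h1
        apply hnotinv (n + 1)
        have hEq : Dn (n + 1) ≤ Dn (n + 2) := Subgroup.relIndex_eq_one.mp h1
        calc Subgroup.map φ ((Dn (n + 2)).subgroupOf D) ≤ Dn (n + 1) := by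
              rw [hsub (n + 1)]; exact hmaple (n + 1)
          _ ≤ Dn (n + 2) := hEq
      have hind2 : (Dn (n + 2)).index ≠ 0 := by
        rw [← Subgroup.relIndex_mul_index (hchain (n + 1))]
        exact mul_ne_zero hr0 ihind
      -- index of Dn (n+2) is a power of p, hence r divides a power of p
      obtain ⟨a, ha⟩ := hG (Dn (n + 2)) hind2
      have hrdvd : r ∣ p ^ a := by
        rw [← ha, ← Subgroup.relIndex_mul_index (hchain (n + 1))]
        exact Dvd.intro _ rfl
      obtain ⟨c, hc, hrc⟩ := (Nat.dvd_prime_pow hp).mp hrdvd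
      have hc1 : c = 1 := by
        rcases Nat.lt_or_ge c 1 with h | h
        · interval_cases c
          exact absurd hrc hr1
        · have : p ^ 1 ≤ p ^ c := Nat.pow_le_pow_right hp.pos h
          have : p ^ c = p ^ 1 := le_antisymm (by simpa using hrc ▸ hrle) this
          exact le_antisymm ((Nat.pow_le_pow_iff_right hp.one_lt).mp this.le) h
      constructor
      · rw [hrc, hc1, pow_one]
      · rw [← Subgroup.relIndex_mul_index (hchain (n + 1))]
        exact mul_ne_zero hr0 ihind
  exact fun n => (main n).1
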